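/- arXiv:2512.11580 — 2 statements merged into one kernel-verified Lean document; each statement's English description precedes it below -/
import Mathlib

section
/- Let X₁, …, X_m be i.i.d. real random variables and let ν ∈ (0,1). Define M := max_{j≤m} |X_j| and suppose that for an independent copy X of X₁ the event {|X| > M} has probability, conditional on the sample, V := P(|X| > M | X₁,…,X_m). Then P(V > ν) ≤ (1-ν)^m. -/
open MeasureTheory Filter

private lemma scenario_key_bound (μ : Measure ℝ) [IsProbabilityMeasure μ] (hatomless : ∀ x : ℝ, μ {x} = 0)
    (ν : ℝ) (hν0 : 0 < ν) (hν1 : ν < 1) :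
    μ {x : ℝ | ENNReal.ofReal ν < μ {y : ℝ | |x| < |y|}} ≤ ENNReal.ofReal (1 - ν) := by
  set G : ℝ → ENNReal := fun t => μ {y : ℝ | t < |y|} with hGdef
  have hGanti : Antitone G := fun s t hst => measure_mono (fun y hy => lt_of_le_of_lt hst hy)
  have hνlt1 : ENNReal.ofReal ν < 1 := by
    rw [← ENNReal.ofReal_one]; exact ENNReal.ofReal_lt_ofReal_iff_of_nonneg hν0.le |>.mpr hν1
  set T : Set ℝ := {t : ℝ | G t ≤ ENNReal.ofReal ν} with hTdef
  -- T is nonempty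
  have hBmeas : ∀ t : ℝ, MeasurableSet {y : ℝ | t < |y|} := fun t =>
    measurableSet_lt measurable_const (_root_.continuous_abs.measurable)
  have hTne : T.Nonempty := by
    have hanti : Antitone (fun n : ℕ => {y : ℝ | (n : ℝ) < |y|}) := by
      intro a b hab y hy
      exact lt_of_le_of_lt (by exact_mod_cast hab : (a:ℝ) ≤ b) hy
    have hint : (⋂ n : ℕ, {y : ℝ | (n : ℝ) < |y|}) = ∅ := by
      ext y; simp only [Set.mem_iInter, Set.mem_setOf_eq, Set.mem_empty_iff_false, iff_false, not_forall, not_lt]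
      obtain ⟨n, hn⟩ := exists_nat_ge |y|
      exact ⟨n, hn⟩
    have htend := tendsto_measure_iInter_atTop (μ := μ)
      (fun n : ℕ => (hBmeas n).nullMeasurableSet) hanti ⟨0, measure_ne_top _ _⟩
    rw [hint] at htend
    simp only [measure_empty] at htend
    have := htend.eventually_lt_const (ENNReal.ofReal_pos.mpr hν0)
    obtain ⟨n, hn⟩ := this.exists
    exact ⟨n, le_of_lt hn⟩
  -- T is bounded below by 0
  have hTbdd : BddBelow T := by
    refine ⟨0, fun t ht => ?_⟩
    by_contra hlt
    push_neg at hlt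
    have : {y : ℝ | t < |y|} = Set.univ := by
      ext y; simp only [Set.mem_setOf_eq, Set.mem_univ, iff_true]
      exact lt_of_lt_of_le hlt (abs_nonneg y)
    have h1 : G t = 1 := by rw [hGdef]; simp only [this, measure_univ]
    rw [hTdef, Set.mem_setOf_eq, h1] at ht
    exact absurd ht (not_le.mpr hνlt1)
  set t₀ : ℝ := sInf T with ht₀def
  -- The target set is contained in {x : |x| ≤ t₀}
  have hsub : {x : ℝ | ENNReal.ofReal ν < μ {y : ℝ | |x| < |y|}} ⊆ {x : ℝ | |x| ≤ t₀} := by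
    intro x hx
    simp only [Set.mem_setOf_eq] at hx ⊢
    by_contra hgt
    push_neg at hgt
    obtain ⟨s, hsT, hs⟩ := (csInf_lt_iff hTbdd hTne).mp hgt
    have : G |x| ≤ ENNReal.ofReal ν := le_trans (hGanti hs.le) hsT
    exact absurd hx (not_lt.mpr this)
  -- μ {x : t₀ ≤ |x|} ≥ ofReal ν
  have hge : ENNReal.ofReal ν ≤ μ {x : ℝ | t₀ ≤ |x|} := by
    set C : ℕ → Set ℝ := fun n => {x : ℝ | t₀ - 1 / (n + 1) < |x|} with hCdef
    have hCanti : Antitone C := by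
      intro a b hab x hx
      refine lt_of_le_of_lt (sub_le_sub_left ?_ t₀) hx
      apply one_div_le_one_div_of_le (by positivity)
      exact_mod_cast by exact_mod_cast add_le_add_left (Nat.cast_le.mpr hab) 1
    have hCint : (⋂ n, C n) = {x : ℝ | t₀ ≤ |x|} := by
      ext x
      simp only [Set.mem_iInter, hCdef, Set.mem_setOf_eq]
      constructor
      · intro h
        by_contra hlt
        push_neg at hlt
        obtain ⟨n, hn⟩ := exists_nat_one_div_lt (sub_pos.mpr hlt)
        have := h n
        linarith
      · intro h n
        have : (0:ℝ) < 1 / (n + 1) := by positivity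
        linarith
    have htend := tendsto_measure_iInter_atTop (μ := μ)
      (fun n => ((measurableSet_lt measurable_const (_root_.continuous_abs.measurable))).nullMeasurableSet)
      hCanti ⟨0, measure_ne_top _ _⟩
    rw [hCint] at htend
    refine ge_of_tendsto htend (Filter.Eventually.of_forall fun n => ?_)
    have hlt : t₀ - 1 / (n + 1) < t₀ := by
      have : (0:ℝ) < 1 / (n + 1) := by positivity
      linarith
    have hnotT : t₀ - 1 / (↑n + 1) ∉ T := fun h => absurd (csInf_le hTbdd h) (not_le.mpr hlt)
    rw [hTdef, Set.mem_setOf_eq, not_le] at hnotT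
    exact hnotT.le
  -- conclude
  calc μ {x : ℝ | ENNReal.ofReal ν < μ {y : ℝ | |x| < |y|}}
      ≤ μ {x : ℝ | |x| ≤ t₀} := measure_mono hsub
    _ ≤ μ ({x : ℝ | |x| < t₀} ∪ ({t₀} ∪ {-t₀})) := by
        apply measure_mono
        intro x hx
        simp only [Set.mem_setOf_eq] at hx
        rcases lt_or_eq_of_le hx with h | h
        · exact Or.inl h
        · have ht0 : 0 ≤ t₀ := h ▸ abs_nonneg x
          rcases (abs_eq ht0).mp h with h1 | h1
          · exact Or.inr (Or.inl (h1 ▸ rfl))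
          · exact Or.inr (Or.inr (h1 ▸ rfl))
    _ ≤ μ {x : ℝ | |x| < t₀} + (μ {t₀} + μ {-t₀}) :=
        le_trans (measure_union_le _ _) (by gcongr; exact measure_union_le _ _)
    _ = μ {x : ℝ | |x| < t₀} := by rw [hatomless, hatomless]; simp
    _ ≤ ENNReal.ofReal (1 - ν) := by
        have hdisj : Disjoint {x : ℝ | |x| < t₀} {x : ℝ | t₀ ≤ |x|} := by
          rw [Set.disjoint_left]
          intro x hx hx'
          simp only [Set.mem_setOf_eq] at hx hx'
          exact absurd hx (not_lt.mpr hx')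
        have hunion : {x : ℝ | |x| < t₀} ∪ {x : ℝ | t₀ ≤ |x|} = Set.univ := by
          ext x; simp [lt_or_ge]
        have hmeas2 : MeasurableSet {x : ℝ | t₀ ≤ |x|} :=
          measurableSet_le measurable_const (_root_.continuous_abs.measurable)
        have hsum : μ {x : ℝ | |x| < t₀} + μ {x : ℝ | t₀ ≤ |x|} = 1 := by
          rw [← measure_union hdisj hmeas2, hunion, measure_univ]
        have h1 : μ {x : ℝ | |x| < t₀} ≤ 1 - ENNReal.ofReal ν := by
          refine ENNReal.le_sub_of_add_le_left ENNReal.ofReal_ne_top ?_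
          rw [add_comm]
          calc μ {x : ℝ | |x| < t₀} + ENNReal.ofReal ν
              ≤ μ {x : ℝ | |x| < t₀} + μ {x : ℝ | t₀ ≤ |x|} := by gcongr
            _ = 1 := hsum
        rwa [ENNReal.ofReal_sub 1 hν0.le, ENNReal.ofReal_one]

/-- Scenario-approach generalization bound for a single scalar constraint:
if `μ` is the (atomless) common law of i.i.d. scenarios `X₁, …, X_m`, the
violation probability `V(xs) = μ {y : |y| > max_j |xs j|}` of the empirical
maximum exceeds `ν` with probability at most `(1-ν)^m` over the sample. -/
theorem scenario_violation_bound {m : ℕ} (hm : 0 < m)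
    (μ : Measure ℝ) [IsProbabilityMeasure μ] (hatomless : ∀ x : ℝ, μ {x} = 0)
    (ν : ℝ) (hν : ν ∈ Set.Ioo (0 : ℝ) 1) :
    (Measure.pi fun _ : Fin m => μ)
      {xs : Fin m → ℝ |
        ν < (μ {y : ℝ | (Finset.univ.sup'
            (Finset.univ_nonempty_iff.mpr (Fin.pos_iff_nonempty.mp hm))
            fun j => |xs j|) < |y|}).toReal} ≤
    ENNReal.ofReal ((1 - ν) ^ m) := by
  have key := scenario_key_bound μ hatomless ν hν.1 hν.2
  obtain ⟨hν0, hν1⟩ := hν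
  set S : Set ℝ := {x : ℝ | ENNReal.ofReal ν < μ {y : ℝ | |x| < |y|}} with hSdef
  have hsub : {xs : Fin m → ℝ |
        ν < (μ {y : ℝ | (Finset.univ.sup'
            (Finset.univ_nonempty_iff.mpr (Fin.pos_iff_nonempty.mp hm))
            fun j => |xs j|) < |y|}).toReal} ⊆ Set.univ.pi fun _ : Fin m => S := by
    intro xs hxs
    simp only [Set.mem_setOf_eq] at hxs
    have h1 : ENNReal.ofReal ν < μ {y : ℝ | (Finset.univ.sup'
        (Finset.univ_nonempty_iff.mpr (Fin.pos_iff_nonempty.mp hm)) fun j => |xs j|) < |y|} :=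
      (ENNReal.ofReal_lt_iff_lt_toReal hν0.le (measure_ne_top _ _)).mpr hxs
    intro j _
    simp only [hSdef, Set.mem_setOf_eq]
    refine lt_of_lt_of_le h1 (measure_mono fun y hy => ?_)
    exact lt_of_le_of_lt (Finset.le_sup' (fun j => |xs j|) (Finset.mem_univ j)) hy
  calc (Measure.pi fun _ : Fin m => μ) _
      ≤ (Measure.pi fun _ : Fin m => μ) (Set.univ.pi fun _ : Fin m => S) := measure_mono hsub
    _ = ∏ _j : Fin m, μ S := Measure.pi_pi _ _
    _ = μ S ^ m := by rw [Finset.prod_const, Finset.card_univ, Fintype.card_fin]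
    _ ≤ ENNReal.ofReal (1 - ν) ^ m := by gcongr
    _ = ENNReal.ofReal ((1 - ν) ^ m) := (ENNReal.ofReal_pow (by linarith) m).symm
end

section
/- Let S₀ ⊆ A be nonempty and define recursively S_t := ⋂_{i ∈ I} ⋃_{a ∈ S_{t-1}} { a' ∈ A : ℓ_{t,i}(a) - L_i · d(a, a') ≥ 0 }, where ℓ_{t,i} : A → ℝ, L_i ≥ 0, and d is a metric on A. If for all t, i, a we have ℓ_{t,i}(a) ≤ h_i(a) and |h_i(a) - h_i(a')| ≤ L_i · d(a,a'), then h_i(a) ≥ 0 for every a ∈ S_t, every i ∈ I, and every t ≥ 1. -/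
/-- SafeOpt-style safe sets: `S 0 = S₀` and
`S t = ⋂ i, ⋃ a ∈ S (t-1), {a' | ℓ t i a - L i * dist a a' ≥ 0}`. -/
def safeSet {A : Type*} [MetricSpace A] {I : Type*}
    (ℓ : ℕ → I → A → ℝ) (L : I → ℝ) (S₀ : Set A) : ℕ → Set A
  | 0 => S₀
  | t + 1 => ⋂ i : I, ⋃ a ∈ safeSet ℓ L S₀ t,
      {a' : A | 0 ≤ ℓ (t + 1) i a - L i * dist a a'}

/-- Safety of the safe set: if `ℓ t i ≤ h i` pointwise and each `h i` is
`L i`-Lipschitz w.r.t. the metric, then every point of `S t` (for `t ≥ 1`)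
satisfies all constraints: `h i a ≥ 0`. -/
theorem safeSet_safe {A : Type*} [MetricSpace A] {I : Type*}
    (ℓ : ℕ → I → A → ℝ) (L : I → ℝ) (hL : ∀ i, 0 ≤ L i)
    (S₀ : Set A) (hS₀ : S₀.Nonempty) (h : I → A → ℝ)
    (hlower : ∀ t i a, ℓ t i a ≤ h i a)
    (hlip : ∀ i a a', |h i a - h i a'| ≤ L i * dist a a') :
    ∀ t : ℕ, 1 ≤ t → ∀ i : I, ∀ a ∈ safeSet ℓ L S₀ t, 0 ≤ h i a := by
  rintro (_ | t) ht i a ha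
  · omega
  · simp only [safeSet, Set.mem_iInter, Set.mem_iUnion] at ha
    obtain ⟨b, _, hb⟩ := ha i
    have h1 : h i b - h i a ≤ L i * dist b a :=
      (le_abs_self _).trans (hlip i b a)
    have h2 : ℓ (t + 1) i b ≤ h i b := hlower _ _ _
    simp only [Set.mem_setOf_eq] at hb
    linarith
end
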